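/- Let u ≥ 11 be odd, u ≡ 3 (mod 6), and let i ≤ u - 3. The only cosets C of nontrivial proper subgroups of ℤ/uℤ with |C| ≡ 1 or 3 (mod 6) that fail to satisfy |C ∩ {0, ..., u-3}| ≥ (1/2)(|C| + 3) are the two cosets {u/3 - 2, 2u/3 - 2, u - 2} and {u/3 - 1, 2u/3 - 1, u - 1} of the subgroup ⟨u/3⟩ of order 3. -/
import Mathlib

set_option maxHeartbeats 1000000 in
theorem stmt_13 (u : ℕ) (hu11 : 11 ≤ u) (hu : u % 6 = 3)
    (H : AddSubgroup (ZMod u)) (hbot : H ≠ ⊥) (htop : H ≠ ⊤)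
    (hmod : Nat.card H % 6 = 1 ∨ Nat.card H % 6 = 3)
    (a : ZMod u) :
    (2 * ({x : ZMod u | x - a ∈ H} ∩ {x : ZMod u | x.val ≤ u - 3}).ncard
        < Nat.card H + 3) ↔
      {x : ZMod u | x - a ∈ H} =
          ({((u / 3 - 2 : ℕ) : ZMod u), ((2 * (u / 3) - 2 : ℕ) : ZMod u),
            ((u - 2 : ℕ) : ZMod u)} : Set (ZMod u)) ∨
        {x : ZMod u | x - a ∈ H} =
          ({((u / 3 - 1 : ℕ) : ZMod u), ((2 * (u / 3) - 1 : ℕ) : ZMod u),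
            ((u - 1 : ℕ) : ZMod u)} : Set (ZMod u)) := by
  have hu0 : u ≠ 0 := by omega
  haveI : NeZero u := ⟨hu0⟩
  obtain ⟨m, hm⟩ : ∃ m, u = 3 * m := ⟨u / 3, by omega⟩
  have hm5 : 5 ≤ m := by omega
  have hdiv : u / 3 = m := by omega
  set d := Nat.card H with hd
  set C := {x : ZMod u | x - a ∈ H} with hC
  set S := {x : ZMod u | x.val ≤ u - 3} with hS
  have hcardZ : Nat.card (ZMod u) = u := by
    simp [Nat.card_eq_fintype_card, ZMod.card]
  have hddvd : d ∣ u := by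
    have := AddSubgroup.card_addSubgroup_dvd_card H
    rwa [hcardZ] at this
  have hd1 : d ≠ 1 := fun h => hbot (AddSubgroup.card_eq_one.mp h)
  have hd3 : 3 ≤ d := by
    have h2 : d ≠ 2 := by rcases hmod with h | h <;> omega
    rcases hmod with h | h <;> omega
  -- C is coset of H through a
  have hCim : C = (fun h => h + a) '' (H : Set (ZMod u)) := by
    ext x
    simp only [hC, Set.mem_setOf_eq, Set.mem_image, SetLike.mem_coe]
    constructor
    · intro hx; exact ⟨x - a, hx, by ring⟩
    · rintro ⟨h, hh, rfl⟩; simpa using hh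
  have hHncard : (H : Set (ZMod u)).ncard = d := by
    rw [← Nat.card_coe_set_eq, hd]
    rfl
  have hCcard : C.ncard = d := by
    rw [hCim, Set.ncard_image_of_injective _ (add_left_injective a), hHncard]
  have hsub : ∀ x ∈ C, ∀ y ∈ C, x - y ∈ H := by
    intro x hx y hy
    have : (x - a) - (y - a) ∈ H := AddSubgroup.sub_mem H hx hy
    simpa using this
  have hone : ¬ (((u - 2 : ℕ) : ZMod u) ∈ C ∧ ((u - 1 : ℕ) : ZMod u) ∈ C) := by
    rintro ⟨h2, h1⟩
    have h1m : (1 : ZMod u) ∈ H := by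
      have hd' := hsub _ h1 _ h2
      have e : ((u - 1 : ℕ) : ZMod u) - ((u - 2 : ℕ) : ZMod u) = 1 := by
        have e' : (u - 1 : ℕ) = (u - 2) + 1 := by omega
        rw [e']; push_cast; ring
      rwa [e] at hd'
    apply htop
    ext z
    simp only [AddSubgroup.mem_top, iff_true]
    have hz : z = z.val • (1 : ZMod u) := by simp
    rw [hz]; exact AddSubgroup.nsmul_mem H h1m z.val
  -- vals of the special casts
  have hv2 : (((u - 2 : ℕ) : ZMod u)).val = u - 2 := ZMod.val_cast_of_lt (by omega)
  have hv1 : (((u - 1 : ℕ) : ZMod u)).val = u - 1 := ZMod.val_cast_of_lt (by omega)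
  -- elements of C \ S
  have hdiffmem : ∀ x ∈ C \ S, x = ((u - 2 : ℕ) : ZMod u) ∨ x = ((u - 1 : ℕ) : ZMod u) := by
    rintro x ⟨hxC, hxS⟩
    have hvlt : x.val < u := ZMod.val_lt x
    have : x.val = u - 2 ∨ x.val = u - 1 := by
      simp only [hS, Set.mem_setOf_eq, not_le] at hxS
      omega
    rcases this with h | h
    · left; rw [← ZMod.natCast_zmod_val x, h]
    · right; rw [← ZMod.natCast_zmod_val x, h]
  have hbad : (C \ S).ncard ≤ 1 := by
    rw [Set.ncard_le_one (Set.toFinite _)]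
    intro x hx y hy
    rcases hdiffmem x hx with h | h <;> rcases hdiffmem y hy with h' | h' <;>
      subst h <;> subst h' <;> try rfl
    · exact absurd ⟨hx.1, hy.1⟩ hone
    · exact absurd ⟨hy.1, hx.1⟩ hone
  have hsplit : (C ∩ S).ncard + (C \ S).ncard = d := by
    rw [← hCcard]
    exact Set.ncard_inter_add_ncard_diff_eq_ncard C S (Set.toFinite C)
  constructor
  · -- forward
    intro hlt
    have hdd : d = 3 := by
      rcases hmod with h | h <;> omega
    have hone' : (C \ S).ncard = 1 := by omega
    obtain ⟨b, hb⟩ : (C \ S).Nonempty := Set.nonempty_of_ncard_ne_zero (by omega)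
    -- H is {0, m, 2m}
    have h3x : ∀ x ∈ H, (3 : ℕ) • x = 0 := by
      intro x hx
      have h := AddSubgroup.addOrderOf_dvd_natCard H hx
      rw [← hd, hdd] at h
      exact addOrderOf_dvd_iff_nsmul_eq_zero.mp h
    have hHset : (H : Set (ZMod u)) =
        {0, ((m : ℕ) : ZMod u), ((2 * m : ℕ) : ZMod u)} := by
      apply Set.eq_of_subset_of_ncard_le
      · intro x hx
        have h3 : (3 : ℕ) • x = 0 := h3x x hx
        have hcast : ((3 * x.val : ℕ) : ZMod u) = 0 := by
          push_cast
          rw [ZMod.natCast_zmod_val]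
          simpa [smul_eq_mul] using h3
        rw [ZMod.natCast_eq_zero_iff] at hcast
        have hcast' : 3 * m ∣ 3 * x.val := by rw [← hm]; exact hcast
        have hmv : m ∣ x.val := (mul_dvd_mul_iff_left (by norm_num : (3:ℕ) ≠ 0)).mp hcast'
        obtain ⟨k, hk⟩ := hmv
        have hvlt : x.val < u := ZMod.val_lt x
        have hk3 : k < 3 := by
          by_contra hk3
          push_neg at hk3
          have : 3 * m ≤ m * k := by
            calc 3 * m = m * 3 := by ring
            _ ≤ m * k := Nat.mul_le_mul_left m hk3
          omega
        have hx' : x = ((x.val : ℕ) : ZMod u) := (ZMod.natCast_zmod_val x).symm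
        interval_cases k
        · left; rw [hx', hk]; simp
        · right; left; rw [hx', hk]; norm_num
        · right; right; rw [hx', hk]; norm_num [mul_comm]
      · calc ({0, ((m : ℕ) : ZMod u), ((2 * m : ℕ) : ZMod u)} : Set (ZMod u)).ncard
            ≤ ({((m : ℕ) : ZMod u), ((2 * m : ℕ) : ZMod u)} : Set (ZMod u)).ncard + 1 :=
              Set.ncard_insert_le _ _
          _ ≤ (({((2 * m : ℕ) : ZMod u)} : Set (ZMod u)).ncard + 1) + 1 := by
              exact Nat.add_le_add_right (Set.ncard_insert_le _ _) 1
          _ = 3 := by rw [Set.ncard_singleton]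
          _ ≤ (H : Set (ZMod u)).ncard := by rw [hHncard, hdd]
      · exact Set.toFinite _
    have hmm : ((m : ℕ) : ZMod u) ∈ H := by
      have : ((m : ℕ) : ZMod u) ∈ (H : Set (ZMod u)) := by
        rw [hHset]; simp
      exact this
    have hmm2 : ((2 * m : ℕ) : ZMod u) ∈ H := by
      have : ((2 * m : ℕ) : ZMod u) ∈ (H : Set (ZMod u)) := by
        rw [hHset]; simp
      exact this
    -- C = b + H
    have hCb : C = {b, b + ((m : ℕ) : ZMod u), b + ((2 * m : ℕ) : ZMod u)} := by
      ext x
      constructor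
      · intro hx
        have hxb : x - b ∈ (H : Set (ZMod u)) := hsub x hx b hb.1
        rw [hHset] at hxb
        simp only [Set.mem_insert_iff, Set.mem_singleton_iff] at hxb
        simp only [Set.mem_insert_iff, Set.mem_singleton_iff]
        rcases hxb with h | h | h
        · left; exact sub_eq_zero.mp h
        · right; left; rw [eq_add_of_sub_eq h]; ring
        · right; right; rw [eq_add_of_sub_eq h]; ring
      · intro hx
        simp only [Set.mem_insert_iff, Set.mem_singleton_iff] at hx
        have hbC : b ∈ C := hb.1
        rcases hx with rfl | rfl | rfl
        · exact hbC
        · show b + _ - a ∈ H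
          have : b + ((m : ℕ) : ZMod u) - a = (b - a) + ((m : ℕ) : ZMod u) := by ring
          rw [this]; exact AddSubgroup.add_mem H hbC hmm
        · show b + _ - a ∈ H
          have : b + ((2 * m : ℕ) : ZMod u) - a = (b - a) + ((2 * m : ℕ) : ZMod u) := by ring
          rw [this]; exact AddSubgroup.add_mem H hbC hmm2
    -- cast arithmetic helper
    have hcadd : ∀ c v : ℕ, c + v = (c + v - u) + u → ((c : ℕ) : ZMod u) + ((v : ℕ) : ZMod u)
        = (((c + v - u : ℕ)) : ZMod u) := by
      intro c v hcv
      rw [← Nat.cast_add, hcv]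
      push_cast
      simp
    rcases hdiffmem b hb with rfl | rfl
    · left
      rw [hCb, hdiv]
      have e1 : ((u - 2 : ℕ) : ZMod u) + ((m : ℕ) : ZMod u) = ((m - 2 : ℕ) : ZMod u) := by
        have := hcadd (u - 2) m (by omega)
        rw [this]
        congr 1
        omega
      have e2 : ((u - 2 : ℕ) : ZMod u) + ((2 * m : ℕ) : ZMod u) = ((2 * m - 2 : ℕ) : ZMod u) := by
        have := hcadd (u - 2) (2 * m) (by omega)
        rw [this]
        congr 1
        omega
      rw [e1, e2]
      ext x
      simp only [Set.mem_insert_iff, Set.mem_singleton_iff]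
      exact or_rotate
    · right
      rw [hCb, hdiv]
      have e1 : ((u - 1 : ℕ) : ZMod u) + ((m : ℕ) : ZMod u) = ((m - 1 : ℕ) : ZMod u) := by
        have := hcadd (u - 1) m (by omega)
        rw [this]
        congr 1
        omega
      have e2 : ((u - 1 : ℕ) : ZMod u) + ((2 * m : ℕ) : ZMod u) = ((2 * m - 1 : ℕ) : ZMod u) := by
        have := hcadd (u - 1) (2 * m) (by omega)
        rw [this]
        congr 1
        omega
      rw [e1, e2]
      ext x
      simp only [Set.mem_insert_iff, Set.mem_singleton_iff]
      exact or_rotate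
  · -- reverse
    intro hCeq
    have h2 : (C ∩ S).ncard ≤ 2 := by
      rcases hCeq with hCeq | hCeq
      · have hsub2 : C ∩ S ⊆ {((u / 3 - 2 : ℕ) : ZMod u), ((2 * (u / 3) - 2 : ℕ) : ZMod u)} := by
          rintro x ⟨hxC, hxS⟩
          rw [hCeq] at hxC
          simp only [Set.mem_insert_iff, Set.mem_singleton_iff] at hxC ⊢
          rcases hxC with h | h | h
          · left; exact h
          · right; exact h
          · exfalso
            simp only [hS, Set.mem_setOf_eq] at hxS
            rw [h, hv2] at hxS
            omega
        have ha1 : (C ∩ S).ncard ≤ ({((u / 3 - 2 : ℕ) : ZMod u), ((2 * (u / 3) - 2 : ℕ) : ZMod u)} : Set (ZMod u)).ncard :=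
          Set.ncard_le_ncard hsub2 (Set.toFinite _)
        have ha2 := Set.ncard_insert_le (((u / 3 - 2 : ℕ) : ZMod u)) ({((2 * (u / 3) - 2 : ℕ) : ZMod u)} : Set (ZMod u))
        rw [Set.ncard_singleton] at ha2
        omega
      · have hsub2 : C ∩ S ⊆ {((u / 3 - 1 : ℕ) : ZMod u), ((2 * (u / 3) - 1 : ℕ) : ZMod u)} := by
          rintro x ⟨hxC, hxS⟩
          rw [hCeq] at hxC
          simp only [Set.mem_insert_iff, Set.mem_singleton_iff] at hxC ⊢
          rcases hxC with h | h | h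
          · left; exact h
          · right; exact h
          · exfalso
            simp only [hS, Set.mem_setOf_eq] at hxS
            rw [h, hv1] at hxS
            omega
        have ha1 : (C ∩ S).ncard ≤ ({((u / 3 - 1 : ℕ) : ZMod u), ((2 * (u / 3) - 1 : ℕ) : ZMod u)} : Set (ZMod u)).ncard :=
          Set.ncard_le_ncard hsub2 (Set.toFinite _)
        have ha2 := Set.ncard_insert_le (((u / 3 - 1 : ℕ) : ZMod u)) ({((2 * (u / 3) - 1 : ℕ) : ZMod u)} : Set (ZMod u))
        rw [Set.ncard_singleton] at ha2
        omega
    omega
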